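/- Let G be an interpolation group. Then the complete lattice Id G of ideals of G is distributive, and the assignment sending the ≍-class [x] of x ∈ G⁺ to the smallest ideal of G containing x is a well-defined isomorphism of join-semilattices from the maximal semilattice quotient ∇(G⁺) onto the semilattice of those ideals of G possessing an order-unit (equivalently, the compact elements of Id G). -/

import Mathlib

/-- An ideal of a partially ordered abelian group: a subgroup which is directed and
convex. -/
def IsPogIdeal {G : Type*} [AddCommGroup G] [PartialOrder G] (I : Set G) : Prop :=
  (0 : G) ∈ I ∧ (∀ x ∈ I, ∀ y ∈ I, x + y ∈ I) ∧ (∀ x ∈ I, -x ∈ I) ∧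
    (∀ x ∈ I, ∀ y ∈ I, ∃ z ∈ I, x ≤ z ∧ y ≤ z) ∧
    (∀ x ∈ I, ∀ z ∈ I, ∀ y : G, x ≤ y → y ≤ z → y ∈ I)

/-- The smallest ideal of `G` containing `x` (the intersection of all ideals
containing `x`). -/
def genIdeal {G : Type*} [AddCommGroup G] [PartialOrder G] (x : G) : Set G :=
  {z : G | ∀ I : Set G, IsPogIdeal I → x ∈ I → z ∈ I}

/-- `x ∝ y` for elements of the positive cone: `x ≤ n • y` for some `n ≥ 1`. -/
def PropG {G : Type*} [AddCommGroup G] [PartialOrder G] (x y : G) : Prop :=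
  ∃ n : ℕ, 1 ≤ n ∧ x ≤ n • y

namespace Stmt7Aux

variable {G : Type*} [AddCommGroup G] [PartialOrder G] [CovariantClass G G (· + ·) (· ≤ ·)]

/-- positive part of a subset -/
theorem addleft {a b : G} (c : G) (h : a ≤ b) : c + a ≤ c + b := add_le_add_right h c

theorem nle_nle {a b : G} (h : a ≤ b) : -b ≤ -a := by
  have := addleft (-b + -a) h
  rwa [show -b + -a + a = -b by abel, show -b + -a + b = -a by abel] at this

theorem nle {a b : G} (h : -a ≤ b) : -b ≤ a := by
  have := nle_nle h; rwa [neg_neg] at this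

theorem addle {a b c d : G} (h1 : a ≤ b) (h2 : c ≤ d) : a + c ≤ b + d := by
  calc a + c ≤ a + d := addleft a h2
    _ = d + a := add_comm a d
    _ ≤ d + b := addleft d h1
    _ = b + d := add_comm d b

theorem lear {a c : G} (h : 0 ≤ c) : a ≤ a + c := by
  have := addleft a h; rwa [add_zero] at this

theorem leal {a c : G} (h : 0 ≤ c) : a ≤ c + a := by
  rw [add_comm]; exact lear h

theorem nnp {a : G} (h : 0 ≤ a) : -a ≤ 0 := by
  have := nle_nle h; rwa [neg_zero] at this

theorem nls {a : G} (h : 0 ≤ a) : -a ≤ a := (nnp h).trans h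

theorem smnn {a : G} (h : 0 ≤ a) (n : ℕ) : 0 ≤ n • a := by
  induction n with
  | zero => simp
  | succ k ih => rw [succ_nsmul]; exact add_nonneg ih h

def pos (I : Set G) : Set G := {x | x ∈ I ∧ 0 ≤ x}

theorem exists_pos_bound {I : Set G} (hI : IsPogIdeal I) {z : G} (hz : z ∈ I) :
    ∃ w, w ∈ I ∧ 0 ≤ w ∧ -w ≤ z ∧ z ≤ w := by
  obtain ⟨h0, _, hneg, hdir, _⟩ := hI
  obtain ⟨w1, hw1I, hzw1, hnzw1⟩ := hdir z hz (-z) (hneg z hz)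
  obtain ⟨w, hwI, hw1w, h0w⟩ := hdir w1 hw1I 0 h0
  exact ⟨w, hwI, h0w, (nle_nle hw1w).trans (nle hnzw1), hzw1.trans hw1w⟩

theorem closure_nonneg {s : Set G} (hs : ∀ x ∈ s, 0 ≤ x) {a : G}
    (ha : a ∈ AddSubmonoid.closure s) : 0 ≤ a := by
  refine AddSubmonoid.closure_induction (fun x hx => hs x hx) le_rfl
    (fun x y _ _ hx hy => add_nonneg hx hy) ha

def supSet (S : Set {I : Set G // IsPogIdeal I}) : Set G :=
  {z | ∃ a ∈ AddSubmonoid.closure (⋃ I ∈ S, pos I.1), -a ≤ z ∧ z ≤ a}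

theorem supSet_gen_nonneg (S : Set {I : Set G // IsPogIdeal I}) :
    ∀ x ∈ ⋃ I ∈ S, pos I.1, 0 ≤ x := by
  intro x hx
  simp only [Set.mem_iUnion] at hx
  obtain ⟨I, _, hI⟩ := hx
  exact hI.2

theorem supSet_ideal (S : Set {I : Set G // IsPogIdeal I}) : IsPogIdeal (supSet S) := by
  have hnn : ∀ a ∈ AddSubmonoid.closure (⋃ I ∈ S, pos I.1), (0:G) ≤ a :=
    fun a ha => closure_nonneg (supSet_gen_nonneg S) ha
  refine ⟨⟨0, zero_mem _, by simp⟩, ?_, ?_, ?_, ?_⟩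
  · rintro x ⟨a, ha, h1, h2⟩ y ⟨b, hb, h3, h4⟩
    exact ⟨a + b, add_mem ha hb, by rw [neg_add]; exact addle h1 h3, addle h2 h4⟩
  · rintro x ⟨a, ha, h1, h2⟩
    exact ⟨a, ha, nle_nle h2, nle h1⟩
  · rintro x ⟨a, ha, h1, h2⟩ y ⟨b, hb, h3, h4⟩
    refine ⟨a + b, ⟨a + b, add_mem ha hb, nls (add_nonneg (hnn a ha) (hnn b hb)),
      le_rfl⟩, h2.trans (lear (hnn b hb)),
      h4.trans (leal (hnn a ha))⟩
  · rintro x ⟨a, ha, h1, _⟩ z ⟨b, hb, _, h4⟩ y hxy hyz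
    exact ⟨a + b, add_mem ha hb,
      ((nle_nle (lear (hnn b hb))).trans h1).trans hxy,
      hyz.trans (h4.trans (leal (hnn a ha)))⟩

theorem subset_supSet {S : Set {I : Set G // IsPogIdeal I}} {I} (hI : I ∈ S) :
    I.1 ⊆ supSet S := by
  intro z hz
  obtain ⟨w, hwI, hw0, h1, h2⟩ := exists_pos_bound I.2 hz
  refine ⟨w, AddSubmonoid.subset_closure ?_, h1, h2⟩
  exact Set.mem_biUnion hI ⟨hwI, hw0⟩

theorem supSet_le {S : Set {I : Set G // IsPogIdeal I}} {J : Set G} (hJ : IsPogIdeal J)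
    (h : ∀ I ∈ S, I.1 ⊆ J) : supSet S ⊆ J := by
  obtain ⟨h0, hadd, hneg, _, hconv⟩ := hJ
  have hcl : ∀ a ∈ AddSubmonoid.closure (⋃ I ∈ S, pos I.1), a ∈ J := by
    intro a ha
    refine AddSubmonoid.closure_induction ?_ h0 (fun x y _ _ hx hy => hadd x hx y hy) ha
    intro x hx
    simp only [Set.mem_iUnion] at hx
    obtain ⟨I, hIS, hxI⟩ := hx
    exact h I hIS hxI.1
  rintro z ⟨a, ha, h1, h2⟩
  exact hconv (-a) (hneg a (hcl a ha)) a (hcl a ha) z h1 h2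

def E (x : G) : Set G := {z | ∃ n : ℕ, -(n • x) ≤ z ∧ z ≤ n • x}

theorem E_ideal {x : G} (hx : 0 ≤ x) : IsPogIdeal (E x) := by
  refine ⟨⟨0, by simp⟩, ?_, ?_, ?_, ?_⟩
  · rintro a ⟨n, h1, h2⟩ b ⟨m, h3, h4⟩
    exact ⟨n + m, by rw [add_nsmul, neg_add]; exact addle h1 h3,
      by rw [add_nsmul]; exact addle h2 h4⟩
  · rintro a ⟨n, h1, h2⟩
    exact ⟨n, nle_nle h2, nle h1⟩
  · rintro a ⟨n, h1, h2⟩ b ⟨m, h3, h4⟩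
    refine ⟨(n + m) • x, ⟨n + m, nls (smnn hx _), le_rfl⟩,
      h2.trans ?_, h4.trans ?_⟩
    · rw [add_nsmul]; exact lear (smnn hx m)
    · rw [add_nsmul]; exact leal (smnn hx n)
  · rintro a ⟨n, h1, _⟩ c ⟨m, _, h4⟩ y hay hyc
    refine ⟨n + m, ?_, ?_⟩
    · refine le_trans ?_ (h1.trans hay)
      rw [add_nsmul]
      exact nle_nle (lear (smnn hx m))
    · refine (hyc.trans h4).trans ?_
      rw [add_nsmul]
      exact leal (smnn hx n)

theorem mem_E_self {x : G} (hx : 0 ≤ x) : x ∈ E x :=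
  ⟨1, by rw [one_nsmul]; exact (nnp hx).trans hx, by rw [one_nsmul]⟩

theorem nsmul_mem {J : Set G} (hJ : IsPogIdeal J) {x : G} (hx : x ∈ J) (n : ℕ) :
    n • x ∈ J := by
  induction n with
  | zero => simpa using hJ.1
  | succ k ih => rw [succ_nsmul]; exact hJ.2.1 _ ih _ hx

theorem E_subset {J : Set G} (hJ : IsPogIdeal J) {x : G} (hx : x ∈ J) : E x ⊆ J := by
  rintro z ⟨n, h1, h2⟩
  exact hJ.2.2.2.2 _ (hJ.2.2.1 _ (nsmul_mem hJ hx n)) _ (nsmul_mem hJ hx n) z h1 h2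

theorem genIdeal_eq {x : G} (hx : 0 ≤ x) : genIdeal x = E x := by
  apply Set.Subset.antisymm
  · intro z hz; exact hz (E x) (E_ideal hx) (mem_E_self hx)
  · intro z hz I hI hxI; exact E_subset hI hxI hz

theorem genIdeal_ideal {x : G} (hx : 0 ≤ x) : IsPogIdeal (genIdeal x) := by
  rw [genIdeal_eq hx]; exact E_ideal hx

theorem mem_genIdeal_self (x : G) : x ∈ genIdeal x := fun _ _ h => h

theorem genIdeal_subset {J : Set G} (hJ : IsPogIdeal J) {x : G} (hxJ : x ∈ J) :
    genIdeal x ⊆ J := fun _ hz => hz J hJ hxJ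

theorem genIdeal_mono {x w : G} (h : x ∈ genIdeal w) : genIdeal x ⊆ genIdeal w :=
  fun _ hz I hI hwI => hz I hI (h I hI hwI)

theorem mem_E_of_le {x y : G} (hy : 0 ≤ y) (hx : 0 ≤ x) {n : ℕ} (h : x ≤ n • y) :
    x ∈ E y :=
  ⟨n, (nnp (smnn hy n)).trans hx, h⟩

theorem genIdeal_eq_iff {x y : G} (hx : 0 ≤ x) (hy : 0 ≤ y) :
    (genIdeal x = genIdeal y ↔ PropG x y ∧ PropG y x) := by
  constructor
  · intro h
    have h1 : x ∈ E y := by rw [← genIdeal_eq hy, ← h]; exact mem_genIdeal_self x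
    have h2 : y ∈ E x := by rw [← genIdeal_eq hx, h]; exact mem_genIdeal_self y
    obtain ⟨n, _, hn⟩ := h1
    obtain ⟨m, _, hm⟩ := h2
    refine ⟨⟨n + 1, Nat.le_add_left 1 n, hn.trans ?_⟩, ⟨m + 1, Nat.le_add_left 1 m, hm.trans ?_⟩⟩
    · rw [succ_nsmul]; exact lear hy
    · rw [succ_nsmul]; exact lear hx
  · rintro ⟨⟨n, _, hn⟩, ⟨m, _, hm⟩⟩
    apply Set.Subset.antisymm
    · exact genIdeal_mono (by rw [genIdeal_eq hy]; exact mem_E_of_le hy hx hn)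
    · exact genIdeal_mono (by rw [genIdeal_eq hx]; exact mem_E_of_le hx hy hm)

def sup2 (I J : Set G) : Set G :=
  {z | ∃ b c, b ∈ I ∧ 0 ≤ b ∧ c ∈ J ∧ 0 ≤ c ∧ -(b + c) ≤ z ∧ z ≤ b + c}

theorem sup2_ideal {I J : Set G} (hI : IsPogIdeal I) (hJ : IsPogIdeal J) :
    IsPogIdeal (sup2 I J) := by
  refine ⟨⟨0, 0, hI.1, le_rfl, hJ.1, le_rfl, by simp⟩, ?_, ?_, ?_, ?_⟩
  · rintro x ⟨b, c, hb, hb0, hc, hc0, h1, h2⟩ y ⟨b', c', hb', hb'0, hc', hc'0, h3, h4⟩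
    refine ⟨b + b', c + c', hI.2.1 _ hb _ hb', add_nonneg hb0 hb'0,
      hJ.2.1 _ hc _ hc', add_nonneg hc0 hc'0, ?_, ?_⟩
    · have := addle h1 h3
      rw [show -(b + c) + -(b' + c') = -(b + b' + (c + c')) by abel] at this
      exact this
    · have := addle h2 h4
      rwa [show b + c + (b' + c') = b + b' + (c + c') by abel] at this
  · rintro x ⟨b, c, hb, hb0, hc, hc0, h1, h2⟩
    exact ⟨b, c, hb, hb0, hc, hc0, nle_nle h2, nle h1⟩
  · rintro x ⟨b, c, hb, hb0, hc, hc0, h1, h2⟩ y ⟨b', c', hb', hb'0, hc', hc'0, h3, h4⟩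
    refine ⟨b + b' + (c + c'), ⟨b + b', c + c', hI.2.1 _ hb _ hb', add_nonneg hb0 hb'0,
      hJ.2.1 _ hc _ hc', add_nonneg hc0 hc'0,
      nls (add_nonneg (add_nonneg hb0 hb'0) (add_nonneg hc0 hc'0)), le_rfl⟩, ?_, ?_⟩
    · refine h2.trans ?_
      have := lear (a := b + c) (add_nonneg hb'0 hc'0)
      rwa [show b + c + (b' + c') = b + b' + (c + c') by abel] at this
    · refine h4.trans ?_
      have := leal (a := b' + c') (add_nonneg hb0 hc0)
      rwa [show b + c + (b' + c') = b + b' + (c + c') by abel] at this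
  · rintro x ⟨b, c, hb, hb0, hc, hc0, h1, _⟩ z ⟨b', c', hb', hb'0, hc', hc'0, _, h4⟩ y hxy hyz
    refine ⟨b + b', c + c', hI.2.1 _ hb _ hb', add_nonneg hb0 hb'0,
      hJ.2.1 _ hc _ hc', add_nonneg hc0 hc'0, ?_, ?_⟩
    · refine le_trans ?_ (h1.trans hxy)
      have := nle_nle (lear (a := b + c) (add_nonneg hb'0 hc'0))
      rwa [show -(b + c + (b' + c')) = -(b + b' + (c + c')) by abel] at this
    · refine (hyz.trans h4).trans ?_
      have := leal (a := b' + c') (add_nonneg hb0 hc0)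
      rwa [show b + c + (b' + c') = b + b' + (c + c') by abel] at this

theorem left_subset_sup2 {I J : Set G} (hI : IsPogIdeal I) (hJ : IsPogIdeal J) :
    I ⊆ sup2 I J := by
  intro z hz
  obtain ⟨w, hwI, hw0, h1, h2⟩ := exists_pos_bound hI hz
  exact ⟨w, 0, hwI, hw0, hJ.1, le_rfl, by rwa [add_zero], by rwa [add_zero]⟩

theorem right_subset_sup2 {I J : Set G} (hI : IsPogIdeal I) (hJ : IsPogIdeal J) :
    J ⊆ sup2 I J := by
  intro z hz
  obtain ⟨w, hwJ, hw0, h1, h2⟩ := exists_pos_bound hJ hz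
  exact ⟨0, w, hI.1, le_rfl, hwJ, hw0, by rwa [zero_add], by rwa [zero_add]⟩

theorem sup2_subset {I J K : Set G} (hK : IsPogIdeal K) (h1 : I ⊆ K) (h2 : J ⊆ K) :
    sup2 I J ⊆ K := by
  rintro z ⟨b, c, hb, _, hc, _, hl, hr⟩
  have hbc : b + c ∈ K := hK.2.1 _ (h1 hb) _ (h2 hc)
  exact hK.2.2.2.2 _ (hK.2.2.1 _ hbc) _ hbc z hl hr

theorem supSet_pair (I J : {I : Set G // IsPogIdeal I}) :
    supSet {I, J} = sup2 I.1 J.1 := by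
  apply Set.Subset.antisymm
  · refine supSet_le (sup2_ideal I.2 J.2) ?_
    intro K hK
    simp only [Set.mem_insert_iff, Set.mem_singleton_iff] at hK
    rcases hK with h | h
    · rw [h]; exact left_subset_sup2 I.2 J.2
    · rw [h]; exact right_subset_sup2 I.2 J.2
  · rintro z ⟨b, c, hb, hb0, hc, hc0, h1, h2⟩
    refine ⟨b + c, add_mem (AddSubmonoid.subset_closure ?_) (AddSubmonoid.subset_closure ?_),
      h1, h2⟩
    · exact Set.mem_biUnion (Set.mem_insert I {J}) ⟨hb, hb0⟩
    · exact Set.mem_biUnion (Set.mem_insert_of_mem I rfl) ⟨hc, hc0⟩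

section Interp

variable (hinterp : ∀ a₀ a₁ b₀ b₁ : G, a₀ ≤ b₀ → a₀ ≤ b₁ → a₁ ≤ b₀ → a₁ ≤ b₁ →
      ∃ x : G, a₀ ≤ x ∧ a₁ ≤ x ∧ x ≤ b₀ ∧ x ≤ b₁)

include hinterp

theorem inter_ideal {I J : Set G} (hI : IsPogIdeal I) (hJ : IsPogIdeal J) :
    IsPogIdeal (I ∩ J) := by
  refine ⟨⟨hI.1, hJ.1⟩, ?_, ?_, ?_, ?_⟩
  · rintro x ⟨h1, h2⟩ y ⟨h3, h4⟩; exact ⟨hI.2.1 _ h1 _ h3, hJ.2.1 _ h2 _ h4⟩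
  · rintro x ⟨h1, h2⟩; exact ⟨hI.2.2.1 _ h1, hJ.2.2.1 _ h2⟩
  · rintro x ⟨h1, h2⟩ y ⟨h3, h4⟩
    obtain ⟨z, hzI, hxz, hyz⟩ := hI.2.2.2.1 x h1 y h3
    obtain ⟨w, hwJ, hxw, hyw⟩ := hJ.2.2.2.1 x h2 y h4
    obtain ⟨t, hxt, hyt, htz, htw⟩ := hinterp x y z w hxz hxw hyz hyw
    exact ⟨t, ⟨hI.2.2.2.2 x h1 z hzI t hxt htz, hJ.2.2.2.2 x h2 w hwJ t hxt htw⟩, hxt, hyt⟩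
  · rintro x ⟨h1, h2⟩ z ⟨h3, h4⟩ y hxy hyz
    exact ⟨hI.2.2.2.2 x h1 z h3 y hxy hyz, hJ.2.2.2.2 x h2 z h4 y hxy hyz⟩

theorem riesz {z b c : G} (hz : 0 ≤ z) (hb : 0 ≤ b) (hc : 0 ≤ c) (h : z ≤ b + c) :
    ∃ b' c', 0 ≤ b' ∧ b' ≤ b ∧ b' ≤ z ∧ 0 ≤ c' ∧ c' ≤ c ∧ z = b' + c' := by
  have hzc : z - c ≤ z := by
    have := addleft z (nnp hc)
    rwa [add_zero, ← sub_eq_add_neg] at this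
  have hzb : z - c ≤ b := by
    have := addleft (-c) h
    rwa [show -c + (b + c) = b by abel, show -c + z = z - c by abel] at this
  obtain ⟨v, h1, h2, h3, h4⟩ := hinterp 0 (z - c) z b hz hb hzc hzb
  refine ⟨v, z - v, h1, h4, h3, ?_, ?_, by abel⟩
  · have := addleft (-v) h3
    rwa [show -v + v = (0:G) by abel, show -v + z = z - v by abel] at this
  · have := addleft (c - v) h2
    rwa [show c - v + (z - c) = z - v by abel, show c - v + v = c by abel] at this

theorem distrib_core {I J K : Set G} (hI : IsPogIdeal I) (hJ : IsPogIdeal J)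
    (hK : IsPogIdeal K) : I ∩ sup2 J K = sup2 (I ∩ J) (I ∩ K) := by
  apply Set.Subset.antisymm
  · rintro z ⟨hzI, b, c, hb, hb0, hc, hc0, hl, hr⟩
    -- find positive upper bound of z in I
    obtain ⟨w, hwI, hw0, -, hzw⟩ := exists_pos_bound hI hzI
    have hbc0 : 0 ≤ b + c := add_nonneg hb0 hc0
    obtain ⟨v, hzv, hv0, hvbc, hvw⟩ := hinterp z 0 (b + c) w hr hzw hbc0 hw0
    have hvI : v ∈ I := hI.2.2.2.2 0 hI.1 w hwI v hv0 hvw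
    obtain ⟨b1, c1, hb10, hb1b, hb1v, hc10, hc1c, hveq⟩ := riesz hinterp hv0 hb0 hc0 hvbc
    have hb1I : b1 ∈ I := hI.2.2.2.2 0 hI.1 v hvI b1 hb10 hb1v
    have hc1I : c1 ∈ I := by
      have : c1 = v + -b1 := by rw [hveq]; abel
      rw [this]; exact hI.2.1 _ hvI _ (hI.2.2.1 _ hb1I)
    -- now v - z
    have hvz0 : 0 ≤ v - z := by rwa [le_sub_iff_add_le, zero_add]
    have hvzI : v - z ∈ I := by
      have : v - z = v + -z := by abel
      rw [this]; exact hI.2.1 _ hvI _ (hI.2.2.1 _ hzI)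
    have hvzle : v - z ≤ (b + b) + (c + c) := by
      have h5 : -z ≤ b + c := nle hl
      have := addle hvbc h5
      rwa [show b + c + (b + c) = b + b + (c + c) by abel, ← sub_eq_add_neg] at this
    obtain ⟨b2, c2, hb20, hb2b, hb2vz, hc20, hc2c, hvzeq⟩ :=
      riesz hinterp hvz0 (add_nonneg hb0 hb0) (add_nonneg hc0 hc0) hvzle
    have hb2I : b2 ∈ I := hI.2.2.2.2 0 hI.1 (v - z) hvzI b2 hb20 hb2vz
    have hc2I : c2 ∈ I := by
      have : c2 = (v - z) + -b2 := by rw [hvzeq]; abel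
      rw [this]; exact hI.2.1 _ hvzI _ (hI.2.2.1 _ hb2I)
    have hb2J : b2 ∈ J := hJ.2.2.2.2 0 hJ.1 (b + b) (hJ.2.1 _ hb _ hb) b2 hb20 hb2b
    have hc2K : c2 ∈ K := hK.2.2.2.2 0 hK.1 (c + c) (hK.2.1 _ hc _ hc) c2 hc20 hc2c
    have hb1J : b1 ∈ J := hJ.2.2.2.2 0 hJ.1 b hb b1 hb10 hb1b
    have hc1K : c1 ∈ K := hK.2.2.2.2 0 hK.1 c hc c1 hc10 hc1c
    refine ⟨b1 + b2, c1 + c2, ⟨hI.2.1 _ hb1I _ hb2I, hJ.2.1 _ hb1J _ hb2J⟩,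
      add_nonneg hb10 hb20, ⟨hI.2.1 _ hc1I _ hc2I, hK.2.1 _ hc1K _ hc2K⟩,
      add_nonneg hc10 hc20, ?_, ?_⟩
    · -- -(b1+b2+(c1+c2)) ≤ z ; z = v - (v-z) = (b1+c1) - (b2+c2)
      have hz' : z = (b1 + c1) - (b2 + c2) := by
        rw [← hveq, ← hvzeq]; abel
      rw [hz']
      have h6 : -(b1 + b2 + (c1 + c2)) ≤ -(b2 + c2) := by
        refine nle_nle ?_
        have := leal (a := b2 + c2) (add_nonneg hb10 hc10)
        rwa [show b1 + c1 + (b2 + c2) = b1 + b2 + (c1 + c2) by abel] at this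
      refine h6.trans ?_
      rw [sub_eq_add_neg]
      exact leal (add_nonneg hb10 hc10)
    · have hz' : z = (b1 + c1) - (b2 + c2) := by
        rw [← hveq, ← hvzeq]; abel
      rw [hz']
      have h7 : (b1 + c1) - (b2 + c2) ≤ b1 + c1 := by
        rw [sub_eq_add_neg]
        have := addleft (b1 + c1) (nnp (add_nonneg hb20 hc20))
        rwa [add_zero] at this
      refine h7.trans ?_
      have := lear (a := b1 + c1) (add_nonneg hb20 hc20)
      rwa [show b1 + c1 + (b2 + c2) = b1 + b2 + (c1 + c2) by abel] at this
  · rintro z ⟨b, c, ⟨hbI, hbJ⟩, hb0, ⟨hcI, hcK⟩, hc0, hl, hr⟩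
    have hbcI : b + c ∈ I := hI.2.1 _ hbI _ hcI
    exact ⟨hI.2.2.2.2 _ (hI.2.2.1 _ hbcI) _ hbcI z hl hr,
      b, c, hbJ, hb0, hcK, hc0, hl, hr⟩

end Interp

end Stmt7Aux

/-- For an interpolation group `G`, the set `Id G` of ideals of `G`, ordered by
inclusion, is a distributive complete lattice, and `[x] ↦` (smallest ideal containing
`x`) is a well-defined join-semilattice isomorphism from the maximal semilattice
quotient `∇(G⁺)` onto the ideals possessing an order-unit, which are exactly the
compact elements of `Id G`. -/
theorem stmt7 (G : Type*) [AddCommGroup G] [PartialOrder G]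
    [CovariantClass G G (· + ·) (· ≤ ·)]
    (hinterp : ∀ a₀ a₁ b₀ b₁ : G, a₀ ≤ b₀ → a₀ ≤ b₁ → a₁ ≤ b₀ → a₁ ≤ b₁ →
      ∃ x : G, a₀ ≤ x ∧ a₁ ≤ x ∧ x ≤ b₀ ∧ x ≤ b₁) :
    ∃ inst : CompleteLattice {I : Set G // IsPogIdeal I},
      (∀ I J : {I : Set G // IsPogIdeal I}, inst.le I J ↔ I.1 ⊆ J.1) ∧
      (∀ I J K : {I : Set G // IsPogIdeal I},
        inst.inf I (inst.sup J K) = inst.sup (inst.inf I J) (inst.inf I K)) ∧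
      ∃ hgen : ∀ x : G, 0 ≤ x → IsPogIdeal (genIdeal x),
        (∀ x : G, 0 ≤ x → x ∈ genIdeal x ∧
          ∀ J : Set G, IsPogIdeal J → x ∈ J → genIdeal x ⊆ J) ∧
        (∀ x y : G, 0 ≤ x → 0 ≤ y →
          (genIdeal x = genIdeal y ↔ PropG x y ∧ PropG y x)) ∧
        (∀ (x y : G) (hx : 0 ≤ x) (hy : 0 ≤ y),
          (⟨genIdeal (x + y), hgen _ (add_nonneg hx hy)⟩ : {I : Set G // IsPogIdeal I}) =
            inst.sup ⟨genIdeal x, hgen x hx⟩ ⟨genIdeal y, hgen y hy⟩) ∧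
        (∀ I : {I : Set G // IsPogIdeal I},
          (@IsCompactElement _ inst.toPartialOrder I ↔
            ∃ u ∈ I.1, 0 ≤ u ∧ ∀ y ∈ I.1, ∃ n : ℕ, 1 ≤ n ∧ y ≤ n • u) ∧
          (@IsCompactElement _ inst.toPartialOrder I ↔
            ∃ (x : G) (hx : 0 ≤ x), I = ⟨genIdeal x, hgen x hx⟩)) := by
  classical
  letI supInst : SupSet {I : Set G // IsPogIdeal I} :=
    ⟨fun S => ⟨Stmt7Aux.supSet S, Stmt7Aux.supSet_ideal S⟩⟩
  have hlub : ∀ S : Set {I : Set G // IsPogIdeal I}, IsLUB S (sSup S) := by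
    intro S
    constructor
    · intro I hI
      show I.1 ⊆ Stmt7Aux.supSet S
      exact Stmt7Aux.subset_supSet hI
    · intro J hJ
      show Stmt7Aux.supSet S ⊆ J.1
      exact Stmt7Aux.supSet_le J.2 (fun I hI => hJ hI)
  letI inst : CompleteLattice {I : Set G // IsPogIdeal I} := completeLatticeOfSup _ hlub
  have hsup : ∀ A B : {I : Set G // IsPogIdeal I},
      (inst.sup A B).1 = Stmt7Aux.sup2 A.1 B.1 := by
    intro A B
    show Stmt7Aux.supSet {A, B} = _
    exact Stmt7Aux.supSet_pair A B
  have hinf : ∀ A B : {I : Set G // IsPogIdeal I},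
      (inst.inf A B).1 = A.1 ∩ B.1 := by
    intro A B
    have hKid := Stmt7Aux.inter_ideal hinterp A.2 B.2
    apply Set.Subset.antisymm
    · intro z hz
      have h1 : (inst.inf A B).1 ⊆ A.1 := inf_le_left (a := A) (b := B)
      have h2 : (inst.inf A B).1 ⊆ B.1 := inf_le_right (a := A) (b := B)
      exact ⟨h1 hz, h2 hz⟩
    · have h3 : (⟨A.1 ∩ B.1, hKid⟩ : {I : Set G // IsPogIdeal I}) ≤ inst.inf A B :=
        le_inf (fun z hz => hz.1) (fun z hz => hz.2)
      exact h3
  refine ⟨inst, fun I J => Iff.rfl, ?_, fun x hx => Stmt7Aux.genIdeal_ideal hx,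
    fun x hx => ⟨Stmt7Aux.mem_genIdeal_self x,
      fun J hJ hxJ => Stmt7Aux.genIdeal_subset hJ hxJ⟩,
    fun x y hx hy => Stmt7Aux.genIdeal_eq_iff hx hy, ?_, ?_⟩
  · -- distributivity
    intro I J K
    apply Subtype.ext
    show (inst.inf I (inst.sup J K)).1 = (inst.sup (inst.inf I J) (inst.inf I K)).1
    rw [hinf, hsup, hsup, hinf, hinf]
    exact Stmt7Aux.distrib_core hinterp I.2 J.2 K.2
  · -- genIdeal of a sum is the sup
    intro x y hx hy
    apply Subtype.ext
    show genIdeal (x + y) = (inst.sup _ _).1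
    rw [hsup]
    have hxy0 : 0 ≤ x + y := add_nonneg hx hy
    have hx' : x ∈ genIdeal (x + y) := by
      rw [Stmt7Aux.genIdeal_eq hxy0]
      exact ⟨1, by rw [one_nsmul]; exact (Stmt7Aux.nnp hxy0).trans hx,
        by rw [one_nsmul]; exact Stmt7Aux.lear hy⟩
    have hy' : y ∈ genIdeal (x + y) := by
      rw [Stmt7Aux.genIdeal_eq hxy0]
      exact ⟨1, by rw [one_nsmul]; exact (Stmt7Aux.nnp hxy0).trans hy,
        by rw [one_nsmul]; exact Stmt7Aux.leal hx⟩
    apply Set.Subset.antisymm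
    · refine Stmt7Aux.genIdeal_subset
        (Stmt7Aux.sup2_ideal (Stmt7Aux.genIdeal_ideal hx) (Stmt7Aux.genIdeal_ideal hy)) ?_
      exact ⟨x, y, Stmt7Aux.mem_genIdeal_self x, hx, Stmt7Aux.mem_genIdeal_self y, hy,
        Stmt7Aux.nls hxy0, le_rfl⟩
    · exact Stmt7Aux.sup2_subset (Stmt7Aux.genIdeal_ideal hxy0)
        (Stmt7Aux.genIdeal_mono hx') (Stmt7Aux.genIdeal_mono hy')
  · -- compactness
    intro I
    -- an order-unit forces I to be E u
    have hEeq : ∀ u, u ∈ I.1 → 0 ≤ u → (∀ y ∈ I.1, ∃ n : ℕ, 1 ≤ n ∧ y ≤ n • u) →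
        I.1 = Stmt7Aux.E u := by
      intro u huI hu0 hu
      apply Set.Subset.antisymm
      · intro y hy
        obtain ⟨n, -, hn⟩ := hu y hy
        obtain ⟨m, -, hm⟩ := hu (-y) (I.2.2.2.1 y hy)
        refine ⟨n + m, ?_, ?_⟩
        · have h1 : -((n + m) • u) ≤ -(m • u) := by
            refine Stmt7Aux.nle_nle ?_
            rw [add_nsmul]
            exact Stmt7Aux.leal (Stmt7Aux.smnn hu0 n)
          exact h1.trans (Stmt7Aux.nle hm)
        · refine hn.trans ?_
          rw [add_nsmul]
          exact Stmt7Aux.lear (Stmt7Aux.smnn hu0 m)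
      · exact Stmt7Aux.E_subset I.2 huI
    have compact_of_unit : ∀ u, u ∈ I.1 → 0 ≤ u →
        (∀ y ∈ I.1, ∃ n : ℕ, 1 ≤ n ∧ y ≤ n • u) →
        @IsCompactElement _ inst.toPartialOrder I := by
      intro u huI hu0 hu
      have hIE := hEeq u huI hu0 hu
      refine (CompleteLattice.isCompactElement_iff_exists_le_sSup_of_le_sSup _ I).2 ?_
      intro s hle
      have hus : u ∈ Stmt7Aux.supSet s := hle huI
      obtain ⟨a, ha, hal, har⟩ := hus
      have hfin : ∃ t : Finset {I : Set G // IsPogIdeal I}, ↑t ⊆ s ∧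
          a ∈ AddSubmonoid.closure (⋃ A ∈ (↑t : Set {I : Set G // IsPogIdeal I}),
            Stmt7Aux.pos A.1) := by
        refine AddSubmonoid.closure_induction ?_ ?_ ?_ ha
        · intro x hx
          rw [Set.mem_iUnion₂] at hx
          obtain ⟨A, hAs, hxA⟩ := hx
          refine ⟨{A}, by simpa using hAs, AddSubmonoid.subset_closure ?_⟩
          rw [Set.mem_iUnion₂]
          exact ⟨A, by simp, hxA⟩
        · exact ⟨∅, by simp, AddSubmonoid.zero_mem _⟩
        · rintro x y _ _ ⟨t1, ht1, hx1⟩ ⟨t2, ht2, hx2⟩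
          refine ⟨t1 ∪ t2, ?_, ?_⟩
          · rw [Finset.coe_union]
            exact Set.union_subset ht1 ht2
          · refine add_mem ?_ ?_
            · refine AddSubmonoid.closure_mono (Set.biUnion_subset_biUnion_left ?_) hx1
              rw [Finset.coe_union]
              exact Set.subset_union_left
            · refine AddSubmonoid.closure_mono (Set.biUnion_subset_biUnion_left ?_) hx2
              rw [Finset.coe_union]
              exact Set.subset_union_right
      obtain ⟨t, hts, hat⟩ := hfin
      refine ⟨t, hts, ?_⟩
      rw [Finset.sup_id_eq_sSup]
      have huT : u ∈ Stmt7Aux.supSet (↑t : Set {I : Set G // IsPogIdeal I}) :=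
        ⟨a, hat, hal, har⟩
      show I.1 ⊆ Stmt7Aux.supSet (↑t : Set {I : Set G // IsPogIdeal I})
      rw [hIE]
      exact Stmt7Aux.E_subset (Stmt7Aux.supSet_ideal _) huT
    have unit_of_compact : @IsCompactElement _ inst.toPartialOrder I →
        ∃ u ∈ I.1, 0 ≤ u ∧ ∀ y ∈ I.1, ∃ n : ℕ, 1 ≤ n ∧ y ≤ n • u := by
      intro hcomp
      set s : Set {I : Set G // IsPogIdeal I} :=
        {A | ∃ x, x ∈ I.1 ∧ 0 ≤ x ∧ A.1 = genIdeal x} with hs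
      have hIs : I ≤ sSup s := by
        show I.1 ⊆ Stmt7Aux.supSet s
        intro z hz
        obtain ⟨w, hwI, hw0, h1, h2⟩ := Stmt7Aux.exists_pos_bound I.2 hz
        refine ⟨w, AddSubmonoid.subset_closure ?_, h1, h2⟩
        rw [Set.mem_iUnion₂]
        exact ⟨⟨genIdeal w, Stmt7Aux.genIdeal_ideal hw0⟩, ⟨w, hwI, hw0, rfl⟩,
          Stmt7Aux.mem_genIdeal_self w, hw0⟩
      obtain ⟨t, hts, hle⟩ :=
        (CompleteLattice.isCompactElement_iff_exists_le_sSup_of_le_sSup _ I).1 hcomp s hIs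
      rw [Finset.sup_id_eq_sSup] at hle
      have hch : ∀ A : {I : Set G // IsPogIdeal I}, A ∈ t →
          ∃ x, x ∈ I.1 ∧ 0 ≤ x ∧ A.1 = genIdeal x := fun A hA => hts hA
      choose f hf1 hf2 hf3 using hch
      set g : {A // A ∈ t} → G := fun A => f A.1 A.2 with hg
      set u : G := ∑ A ∈ t.attach, g A with hu
      have hsum_nn : ∀ s' : Finset {A // A ∈ t}, (0 : G) ≤ ∑ A ∈ s', g A := by
        intro s'
        refine Finset.sum_induction g (fun x => 0 ≤ x)
          (fun a b ha hb => add_nonneg ha hb) le_rfl (fun A _ => hf2 A.1 A.2)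
      have huI : u ∈ I.1 :=
        Finset.sum_induction g (fun x => x ∈ I.1)
          (fun a b ha hb => I.2.2.1 a ha b hb) I.2.1 (fun A _ => hf1 A.1 A.2)
      have hu0 : 0 ≤ u := hsum_nn t.attach
      have hgle : ∀ A : {A // A ∈ t}, g A ≤ u := by
        intro A
        rw [hu, ← Finset.add_sum_erase t.attach g (Finset.mem_attach t A)]
        exact Stmt7Aux.lear (hsum_nn _)
      have hTE : Stmt7Aux.supSet (↑t : Set {I : Set G // IsPogIdeal I}) ⊆
          Stmt7Aux.E u := by
        refine Stmt7Aux.supSet_le (Stmt7Aux.E_ideal hu0) ?_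
        intro A hA
        have hA' : A ∈ t := hA
        rw [hf3 A hA', Stmt7Aux.genIdeal_eq (hf2 A hA')]
        refine Stmt7Aux.E_subset (Stmt7Aux.E_ideal hu0) ?_
        refine ⟨1, ?_, ?_⟩
        · rw [one_nsmul]
          exact (Stmt7Aux.nnp hu0).trans (hf2 A hA')
        · rw [one_nsmul]
          exact hgle ⟨A, hA'⟩
      refine ⟨u, huI, hu0, ?_⟩
      intro y hy
      have hyE : y ∈ Stmt7Aux.E u := hTE (hle hy)
      obtain ⟨n, -, hn⟩ := hyE
      refine ⟨n + 1, Nat.le_add_left 1 n, hn.trans ?_⟩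
      rw [succ_nsmul]
      exact Stmt7Aux.lear hu0
    constructor
    · constructor
      · exact unit_of_compact
      · rintro ⟨u, huI, hu0, hu⟩
        exact compact_of_unit u huI hu0 hu
    · constructor
      · intro hcomp
        obtain ⟨u, huI, hu0, hu⟩ := unit_of_compact hcomp
        refine ⟨u, hu0, ?_⟩
        apply Subtype.ext
        show I.1 = genIdeal u
        rw [Stmt7Aux.genIdeal_eq hu0]
        exact hEeq u huI hu0 hu
      · rintro ⟨x, hx, hIeq⟩
        have hmem : x ∈ I.1 := by
          rw [hIeq]
          exact Stmt7Aux.mem_genIdeal_self x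
        refine compact_of_unit x hmem hx ?_
        intro y hy
        have hyE : y ∈ Stmt7Aux.E x := by
          rw [← Stmt7Aux.genIdeal_eq hx]
          rw [hIeq] at hy
          exact hy
        obtain ⟨n, -, hn⟩ := hyE
        refine ⟨n + 1, Nat.le_add_left 1 n, hn.trans ?_⟩
        rw [succ_nsmul]
        exact Stmt7Aux.lear hx
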